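/- The map π ↦ π̌, where 2π̌(k) = π²(2k), is a bijection from the set of π ∈ S_NC⁻(2p,2q) such that γ_{2p,2q}π⁻¹ separates the points of O = {1,3,…,2p+2q−1}, onto S_NC(p,q). Moreover a cycle of π of length 2m corresponds to a cycle of π̌ of length m. -/

import Mathlib

open Equiv Finset
open scoped Classical

noncomputable section

def numCycles {n : ℕ} (π : Equiv.Perm (Fin n)) : ℕ :=
  π.cycleType.card + (univ.filter fun x => π x = x).card

def plen {n : ℕ} (π : Equiv.Perm (Fin n)) : ℕ := n - numCycles π

def gammaPQ (p q : ℕ) : Equiv.Perm (Fin (p + q)) :=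
  finSumFinEquiv.permCongr (Equiv.sumCongr (finRotate p) (finRotate q))

def cycleLen {n : ℕ} (π : Equiv.Perm (Fin n)) (k : Fin n) : ℕ :=
  (univ.filter fun m => π.SameCycle k m).card

def Separates {n : ℕ} (σ : Equiv.Perm (Fin n)) (A : Finset (Fin n)) : Prop :=
  ∀ a ∈ A, ∀ b ∈ A, σ.SameCycle a b → a = b

def oddSet (n : ℕ) : Finset (Fin n) := univ.filter fun i => Odd (i.val + 1)

def IsSNC (p q : ℕ) (π : Equiv.Perm (Fin (p + q))) : Prop :=
  (∃ i j, π.SameCycle i j ∧ ¬ (gammaPQ p q).SameCycle i j) ∧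
    numCycles π + numCycles (gammaPQ p q * π⁻¹) = p + q

def SameParity {n : ℕ} (a b : Fin n) : Prop := (Odd (a.val + 1) ↔ Odd (b.val + 1))

def EvenCycles {n : ℕ} (π : Equiv.Perm (Fin n)) : Prop := ∀ k, Even (cycleLen π k)

def ParityReversing {n : ℕ} (π : Equiv.Perm (Fin n)) : Prop := ∀ k, ¬ SameParity k (π k)

def SNCminus (p q : ℕ) (π : Equiv.Perm (Fin (p + q))) : Prop :=
  IsSNC p q π ∧ EvenCycles π ∧ ParityReversing π

end

noncomputable def dbl {p q : ℕ} (k : Fin (p + q)) : Fin (2*p + 2*q) :=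
  ⟨2 * k.val + 1, by have := k.isLt; omega⟩

set_option linter.unusedSectionVars false
set_option maxHeartbeats 1000000

theorem Equiv.Perm.inv_apply_self {α : Type*} (f : Equiv.Perm α) (x : α) : f⁻¹ (f x) = x :=
  f.symm_apply_apply x

theorem Equiv.Perm.apply_inv_self {α : Type*} (f : Equiv.Perm α) (x : α) : f (f⁻¹ x) = x :=
  f.apply_symm_apply x

section OrbitLemmas
variable {α : Type*} [Fintype α] [DecidableEq α] (f : Equiv.Perm α)

lemma sameCycle_iff_nat (x y : α) : f.SameCycle x y ↔ ∃ n : ℕ, (f ^ n) x = y := by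
  constructor
  · intro h
    obtain ⟨i, _, h⟩ := h.exists_pow_eq'
    exact ⟨i, h⟩
  · rintro ⟨n, h⟩
    exact ⟨n, by exact_mod_cast h⟩

noncomputable def orb (x : α) : Finset α := univ.filter fun m => f.SameCycle x m

lemma mem_orb {x y : α} : y ∈ orb f x ↔ f.SameCycle x y := by simp [orb]

lemma self_mem_orb (x : α) : x ∈ orb f x := mem_orb f |>.2 (Equiv.Perm.SameCycle.refl f x)

lemma orb_eq_of_sameCycle {x y : α} (h : f.SameCycle x y) : orb f x = orb f y := by
  ext z; simp only [mem_orb]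
  exact ⟨fun hz => h.symm.trans hz, fun hz => h.trans hz⟩

lemma pow_fixed {x : α} (h : f x = x) (m : ℕ) : (f ^ m) x = x := by
  induction m with
  | zero => rfl
  | succ k ih => rw [pow_succ, Equiv.Perm.mul_apply, h, ih]

lemma orb_fixed {x : α} (h : f x = x) : orb f x = {x} := by
  ext z; simp only [mem_orb, mem_singleton]
  constructor
  · intro hz
    obtain ⟨n, hn⟩ := (sameCycle_iff_nat f x z).1 hz
    rw [pow_fixed f h n] at hn; exact hn.symm
  · rintro rfl; exact Equiv.Perm.SameCycle.refl f _

lemma sameCycle_of_fixed_eq {x y : α} (h : f x = x) (hs : f.SameCycle x y) : x = y := by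
  have := orb_fixed f h ▸ (mem_orb f).2 hs
  simpa [eq_comm] using this

end OrbitLemmas

lemma orb_eq_support_cycleOf {n : ℕ} (f : Equiv.Perm (Fin n)) {x : Fin n} (hx : f x ≠ x) :
    orb f x = (f.cycleOf x).support := by
  ext y
  rw [mem_orb, Equiv.Perm.mem_support_cycleOf_iff]
  exact ⟨fun h => ⟨h, Equiv.Perm.mem_support.2 hx⟩, fun h => h.1⟩


lemma orb_fixed' {α : Type*} [Fintype α] [DecidableEq α] (f : Equiv.Perm α) {x : α}
    (h : f x = x) : orb f x = {x} := by
  ext z; simp only [mem_orb, Finset.mem_singleton]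
  constructor
  · intro hz
    obtain ⟨i, _, hn⟩ := hz.exists_pow_eq'
    have : ∀ m : ℕ, (f ^ m) x = x := by
      intro m; induction m with
      | zero => rfl
      | succ k ih => rw [pow_succ, Equiv.Perm.mul_apply, h, ih]
    rw [this i] at hn; exact hn.symm
  · rintro rfl; exact Equiv.Perm.SameCycle.refl f _

lemma numCycles_eq_card_orbs {n : ℕ} (f : Equiv.Perm (Fin n)) :
    numCycles f = (univ.image (orb f)).card := by
  classical
  have hsplit : (univ : Finset (Fin n)) = f.support ∪ (univ.filter fun x => f x = x) := by
    ext x; simp [Equiv.Perm.mem_support]; tauto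
  have himg : univ.image (orb f) =
      (f.support.image (orb f)) ∪ ((univ.filter fun x => f x = x).image (orb f)) := by
    conv_lhs => rw [hsplit]
    rw [Finset.image_union]
  -- image over support = image of support under cycleFactorsFinset supports
  have hsupp_img : f.support.image (orb f) = f.cycleFactorsFinset.image Equiv.Perm.support := by
    ext S
    simp only [Finset.mem_image]
    constructor
    · rintro ⟨x, hx, rfl⟩
      have hx' : f x ≠ x := Equiv.Perm.mem_support.1 hx
      refine ⟨f.cycleOf x, Equiv.Perm.cycleOf_mem_cycleFactorsFinset_iff.2 hx, ?_⟩
      exact (orb_eq_support_cycleOf f hx').symm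
    · rintro ⟨c, hc, rfl⟩
      obtain ⟨a, ha⟩ := (Equiv.Perm.mem_cycleFactorsFinset_iff.1 hc).1.nonempty_support
      have hca : c = f.cycleOf a := Equiv.Perm.cycle_is_cycleOf ha hc
      have haf : a ∈ f.support := Equiv.Perm.support_cycleOf_le f a (hca ▸ ha)
      refine ⟨a, haf, ?_⟩
      rw [orb_eq_support_cycleOf f (Equiv.Perm.mem_support.1 haf), hca]
  -- fixed part
  have hfix_img : (univ.filter fun x => f x = x).image (orb f)
      = (univ.filter fun x => f x = x).image (fun x => ({x} : Finset (Fin n))) := by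
    apply Finset.image_congr
    intro x hx
    exact orb_fixed' f (by simpa using hx)
  have hcard1 : (f.cycleFactorsFinset.image Equiv.Perm.support).card = f.cycleType.card := by
    rw [Equiv.Perm.cycleType_def, Multiset.card_map, ← Finset.card_def]
    apply Finset.card_image_of_injOn
    intro c hc c' hc' hcc
    by_contra hne
    have hd := (Equiv.Perm.cycleFactorsFinset_pairwise_disjoint f) hc hc' hne
    have := Equiv.Perm.Disjoint.disjoint_support hd
    rw [hcc, disjoint_self] at this
    exact ((Equiv.Perm.mem_cycleFactorsFinset_iff.1 hc').1.nonempty_support).ne_empty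
      (Finset.bot_eq_empty ▸ this)
  have hcard2 : ((univ.filter fun x => f x = x).image (fun x => ({x} : Finset (Fin n)))).card
      = (univ.filter fun x => f x = x).card := by
    apply Finset.card_image_of_injective
    intro a b hab
    simpa using hab
  have hdisj : Disjoint (f.support.image (orb f))
      ((univ.filter fun x => f x = x).image (orb f)) := by
    rw [Finset.disjoint_left]
    rintro S hS hS'
    rw [Finset.mem_image] at hS hS'
    obtain ⟨x, hx, rfl⟩ := hS
    obtain ⟨y, hy, hyx⟩ := hS'
    have hyfix : f y = y := by simpa using hy
    rw [orb_fixed' f hyfix] at hyx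
    have : x ∈ ({y} : Finset (Fin n)) := by
      rw [hyx]
      exact (mem_orb f).2 (Equiv.Perm.SameCycle.refl f x)
    simp only [Finset.mem_singleton] at this
    subst this
    exact (Equiv.Perm.mem_support.1 hx) hyfix
  rw [himg, Finset.card_union_of_disjoint hdisj, hsupp_img, hfix_img, hcard1, hcard2, numCycles]

lemma finRotate_val {p : ℕ} (i : Fin p) : (finRotate p i).val = (i.val + 1) % p := by
  cases p with
  | zero => exact absurd i.isLt (by omega)
  | succ m =>
    rw [finRotate_succ_apply]
    simp [Fin.add_def]

lemma gammaPQ_val (p q : ℕ) (k : Fin (p + q)) :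
    ((gammaPQ p q) k).val =
      if k.val + 1 = p then 0 else if k.val + 1 = p + q then p else k.val + 1 := by
  have hk := k.isLt
  rcases lt_or_ge k.val p with h | h
  · have hke : k = Fin.castAdd q (⟨k.val, h⟩ : Fin p) := by ext; rfl
    rw [gammaPQ, hke]
    simp only [Equiv.permCongr_apply, Equiv.symm_apply_apply]
    rw [show (finSumFinEquiv.symm (Fin.castAdd q ⟨k.val, h⟩)) = Sum.inl ⟨k.val, h⟩ from
      finSumFinEquiv_symm_apply_castAdd _]
    simp only [Equiv.sumCongr_apply, Sum.map_inl, finSumFinEquiv_apply_left, Fin.coe_castAdd]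
    rw [finRotate_val]
    rcases eq_or_ne (k.val + 1) p with h1 | h1
    · simp [h1, Nat.mod_self]
    · have h2 : k.val + 1 < p := by omega
      rw [Nat.mod_eq_of_lt h2, if_neg h1, if_neg (by omega)]
  · have hq : k.val - p < q := by omega
    have hke : k = Fin.natAdd p (⟨k.val - p, hq⟩ : Fin q) := by ext; simp; omega
    rw [gammaPQ, hke]
    simp only [Equiv.permCongr_apply, Equiv.symm_apply_apply]
    rw [show (finSumFinEquiv.symm (Fin.natAdd p ⟨k.val - p, hq⟩)) = Sum.inr ⟨k.val - p, hq⟩ from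
      finSumFinEquiv_symm_apply_natAdd _]
    simp only [Equiv.sumCongr_apply, Sum.map_inr, finSumFinEquiv_apply_right, Fin.coe_natAdd]
    rw [finRotate_val]
    rcases eq_or_ne (k.val + 1) (p + q) with h1 | h1
    · have : k.val - p + 1 = q := by omega
      rw [this, Nat.mod_self, if_neg (by omega), if_pos (by omega)]; omega
    · have h2 : k.val - p + 1 < q := by omega
      rw [Nat.mod_eq_of_lt h2, if_neg (by omega), if_neg (by omega)]
      omega

lemma mod_succ_eq (a p : ℕ) (hp : 0 < p) :
    (a + 1) % p = if a % p + 1 = p then 0 else a % p + 1 := by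
  conv_lhs => rw [← Nat.div_add_mod a p, Nat.add_assoc]
  rw [Nat.mul_add_mod]
  split_ifs with h
  · rw [h, Nat.mod_self]
  · exact Nat.mod_eq_of_lt (by have := Nat.mod_lt a hp; omega)

lemma gammaPQ_block (p q : ℕ) (k : Fin (p + q)) :
    ((gammaPQ p q) k).val < p ↔ k.val < p := by
  have hk := k.isLt
  rw [gammaPQ_val]
  split_ifs with h1 h2 <;> omega

lemma gammaPQ_pow_block (p q : ℕ) (j : ℕ) (k : Fin (p + q)) :
    (((gammaPQ p q) ^ j) k).val < p ↔ k.val < p := by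
  induction j with
  | zero => rfl
  | succ m ih =>
    rw [pow_succ', Equiv.Perm.mul_apply, gammaPQ_block]
    exact ih

lemma gammaPQ_pow_val_left (p q : ℕ) (k : Fin (p + q)) (h : k.val < p) (j : ℕ) :
    (((gammaPQ p q) ^ j) k).val = (k.val + j) % p := by
  have hp : 0 < p := by omega
  induction j with
  | zero => simpa using (Nat.mod_eq_of_lt h).symm
  | succ m ih =>
    rw [pow_succ', Equiv.Perm.mul_apply, gammaPQ_val, ih]
    have hm : (k.val + m) % p < p := Nat.mod_lt _ hp
    rw [← Nat.add_assoc, mod_succ_eq _ _ hp]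
    split_ifs with h1 h2 <;> omega

lemma gammaPQ_pow_val_right (p q : ℕ) (k : Fin (p + q)) (h : p ≤ k.val) (j : ℕ) :
    (((gammaPQ p q) ^ j) k).val = p + ((k.val - p + j) % q) := by
  have hk := k.isLt
  have hq : 0 < q := by omega
  induction j with
  | zero => simp [Nat.mod_eq_of_lt (show k.val - p < q by omega)]; omega
  | succ m ih =>
    rw [pow_succ', Equiv.Perm.mul_apply, gammaPQ_val, ih]
    have hm : (k.val - p + m) % q < q := Nat.mod_lt _ hq
    rw [show k.val - p + (m + 1) = (k.val - p + m) + 1 by omega, mod_succ_eq _ _ hq]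
    split_ifs with h1 h2 <;> omega

lemma sameCycle_gammaPQ (p q : ℕ) (x y : Fin (p + q)) :
    (gammaPQ p q).SameCycle x y ↔ (x.val < p ↔ y.val < p) := by
  constructor
  · intro h
    obtain ⟨i, _, hi⟩ := h.exists_pow_eq'
    rw [← hi, gammaPQ_pow_block]
  · intro h
    have hx := x.isLt
    have hy := y.isLt
    rcases lt_or_ge x.val p with hxp | hxp
    · have hyp : y.val < p := h.1 hxp
      refine ⟨((p - x.val) + y.val : ℕ), ?_⟩
      rw [zpow_natCast]
      apply Fin.ext
      rw [gammaPQ_pow_val_left p q x hxp]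
      rw [show x.val + (p - x.val + y.val) = p + y.val by omega, Nat.add_mod_left]
      exact Nat.mod_eq_of_lt hyp
    · have hyp : p ≤ y.val := by omega
      refine ⟨((q - (x.val - p)) + (y.val - p) : ℕ), ?_⟩
      rw [zpow_natCast]
      apply Fin.ext
      rw [gammaPQ_pow_val_right p q x hxp]
      rw [show x.val - p + (q - (x.val - p) + (y.val - p)) = q + (y.val - p) by omega,
        Nat.add_mod_left, Nat.mod_eq_of_lt (by omega)]
      omega


section Doubling
variable {p q : ℕ}

noncomputable def oddPt (k : Fin (p + q)) : Fin (2*p + 2*q) :=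
  ⟨2 * k.val, by have := k.isLt; omega⟩

noncomputable def halfPt (x : Fin (2*p + 2*q)) : Fin (p + q) :=
  ⟨x.val / 2, by have := x.isLt; omega⟩

lemma dbl_val (k : Fin (p + q)) : (dbl (p := p) (q := q) k).val = 2 * k.val + 1 := rfl
lemma oddPt_val (k : Fin (p + q)) : (oddPt (p := p) (q := q) k).val = 2 * k.val := rfl

lemma dbl_mod (k : Fin (p + q)) : (dbl (p := p) (q := q) k).val % 2 = 1 := by
  rw [dbl_val]; omega

lemma oddPt_mod (k : Fin (p + q)) : (oddPt (p := p) (q := q) k).val % 2 = 0 := by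
  rw [oddPt_val]; omega

lemma halfPt_dbl (k : Fin (p + q)) : halfPt (dbl k) = k := by
  apply Fin.ext; show (2 * k.val + 1) / 2 = k.val; omega

lemma halfPt_oddPt (k : Fin (p + q)) : halfPt (oddPt k) = k := by
  apply Fin.ext; show (2 * k.val) / 2 = k.val; omega

lemma dbl_inj : Function.Injective (dbl (p := p) (q := q)) := by
  intro a b h; have := congrArg Fin.val h; rw [dbl_val, dbl_val] at this
  exact Fin.ext (by omega)

lemma oddPt_inj : Function.Injective (oddPt (p := p) (q := q)) := by
  intro a b h; have := congrArg Fin.val h; rw [oddPt_val, oddPt_val] at this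
  exact Fin.ext (by omega)

lemma dbl_ne_oddPt (a b : Fin (p + q)) : dbl a ≠ oddPt b := by
  intro h; have := congrArg Fin.val h; rw [dbl_val, oddPt_val] at this; omega

lemma dbl_or_oddPt (x : Fin (2*p + 2*q)) :
    (x.val % 2 = 1 ∧ x = dbl (halfPt x)) ∨ (x.val % 2 = 0 ∧ x = oddPt (halfPt x)) := by
  rcases Nat.mod_two_eq_zero_or_one x.val with h | h
  · exact Or.inr ⟨h, Fin.ext (show x.val = 2 * (x.val / 2) by omega)⟩
  · exact Or.inl ⟨h, Fin.ext (show x.val = 2 * (x.val / 2) + 1 by omega)⟩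

lemma g2_oddPt (k : Fin (p + q)) : gammaPQ (2*p) (2*q) (oddPt k) = dbl k := by
  have hk := k.isLt
  apply Fin.ext
  rw [gammaPQ_val, dbl_val, oddPt_val]
  split_ifs with h1 h2 <;> omega

lemma g2_dbl (k : Fin (p + q)) : gammaPQ (2*p) (2*q) (dbl k) = oddPt (gammaPQ p q k) := by
  have hk := k.isLt
  apply Fin.ext
  rw [gammaPQ_val, oddPt_val, gammaPQ_val, dbl_val]
  split_ifs with h1 h2 h3 h4 <;> omega

lemma exists_dbl_or_oddPt (x : Fin (2*p + 2*q)) :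
    (∃ k, x = dbl k) ∨ (∃ k, x = oddPt k) := by
  rcases dbl_or_oddPt x with ⟨_, hx⟩ | ⟨_, hx⟩
  · exact Or.inl ⟨halfPt x, hx⟩
  · exact Or.inr ⟨halfPt x, hx⟩

end Doubling

section Gconstruction
variable {p q : ℕ}

noncomputable def Gfun (σ : Equiv.Perm (Fin (p + q))) (x : Fin (2*p + 2*q)) :
    Fin (2*p + 2*q) :=
  if x.val % 2 = 1 then oddPt (gammaPQ p q (halfPt x))
  else dbl (σ ((gammaPQ p q)⁻¹ (halfPt x)))

noncomputable def Ghinv (σ : Equiv.Perm (Fin (p + q))) (y : Fin (2*p + 2*q)) :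
    Fin (2*p + 2*q) :=
  if y.val % 2 = 0 then dbl ((gammaPQ p q)⁻¹ (halfPt y))
  else oddPt (gammaPQ p q (σ⁻¹ (halfPt y)))

lemma Gfun_dbl (σ : Equiv.Perm (Fin (p + q))) (k : Fin (p + q)) :
    Gfun σ (dbl k) = oddPt (gammaPQ p q k) := by
  rw [Gfun, if_pos (dbl_mod k), halfPt_dbl]

lemma Gfun_oddPt (σ : Equiv.Perm (Fin (p + q))) (k : Fin (p + q)) :
    Gfun σ (oddPt k) = dbl (σ ((gammaPQ p q)⁻¹ k)) := by
  rw [Gfun, if_neg (by rw [oddPt_mod]; omega), halfPt_oddPt]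

lemma Ghinv_oddPt (σ : Equiv.Perm (Fin (p + q))) (m : Fin (p + q)) :
    Ghinv σ (oddPt m) = dbl ((gammaPQ p q)⁻¹ m) := by
  rw [Ghinv, if_pos (oddPt_mod m), halfPt_oddPt]

lemma Ghinv_dbl (σ : Equiv.Perm (Fin (p + q))) (k : Fin (p + q)) :
    Ghinv σ (dbl k) = oddPt (gammaPQ p q (σ⁻¹ k)) := by
  rw [Ghinv, if_neg (by rw [dbl_mod]; omega), halfPt_dbl]

noncomputable def Gperm (σ : Equiv.Perm (Fin (p + q))) : Equiv.Perm (Fin (2*p + 2*q)) where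
  toFun := Gfun σ
  invFun := Ghinv σ
  left_inv := by
    intro x
    rcases exists_dbl_or_oddPt x with ⟨k, rfl⟩ | ⟨k, rfl⟩
    · rw [Gfun_dbl, Ghinv_oddPt, Equiv.Perm.inv_apply_self]
    · rw [Gfun_oddPt, Ghinv_dbl, Equiv.Perm.inv_apply_self, Equiv.Perm.apply_inv_self]
  right_inv := by
    intro y
    rcases exists_dbl_or_oddPt y with ⟨k, rfl⟩ | ⟨k, rfl⟩
    · rw [Ghinv_dbl, Gfun_oddPt, Equiv.Perm.inv_apply_self, Equiv.Perm.apply_inv_self]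
    · rw [Ghinv_oddPt, Gfun_dbl, Equiv.Perm.apply_inv_self]

lemma Gperm_dbl (σ : Equiv.Perm (Fin (p + q))) (k : Fin (p + q)) :
    Gperm σ (dbl k) = oddPt (gammaPQ p q k) := by
  exact Gfun_dbl σ k

lemma Gperm_oddPt (σ : Equiv.Perm (Fin (p + q))) (k : Fin (p + q)) :
    Gperm σ (oddPt k) = dbl (σ ((gammaPQ p q)⁻¹ k)) := by
  exact Gfun_oddPt σ k

lemma Gperm_inv_oddPt (σ : Equiv.Perm (Fin (p + q))) (m : Fin (p + q)) :
    (Gperm σ)⁻¹ (oddPt m) = dbl ((gammaPQ p q)⁻¹ m) := by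
  rw [Equiv.Perm.inv_eq_iff_eq, Gperm_dbl, Equiv.Perm.apply_inv_self]

lemma Gperm_inv_dbl (σ : Equiv.Perm (Fin (p + q))) (k : Fin (p + q)) :
    (Gperm σ)⁻¹ (dbl k) = oddPt (gammaPQ p q (σ⁻¹ k)) := by
  rw [Equiv.Perm.inv_eq_iff_eq, Gperm_oddPt, Equiv.Perm.inv_apply_self,
    Equiv.Perm.apply_inv_self]

lemma Gperm_sq_dbl (σ : Equiv.Perm (Fin (p + q))) (k : Fin (p + q)) :
    Gperm σ (Gperm σ (dbl k)) = dbl (σ k) := by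
  rw [Gperm_dbl, Gperm_oddPt, Equiv.Perm.inv_apply_self]

lemma Gperm_pow_even (σ : Equiv.Perm (Fin (p + q))) (i : ℕ) (k : Fin (p + q)) :
    ((Gperm σ) ^ (2 * i)) (dbl k) = dbl ((σ ^ i) k) := by
  induction i with
  | zero => rfl
  | succ m ih =>
    rw [show 2 * (m + 1) = 2 * m + 1 + 1 by omega, pow_succ', pow_succ',
      Equiv.Perm.mul_apply, Equiv.Perm.mul_apply, ih, Gperm_sq_dbl, pow_succ',
      Equiv.Perm.mul_apply]

lemma Gperm_pow_odd (σ : Equiv.Perm (Fin (p + q))) (i : ℕ) (k : Fin (p + q)) :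
    ((Gperm σ) ^ (2 * i + 1)) (dbl k) = oddPt (gammaPQ p q ((σ ^ i) k)) := by
  rw [pow_succ', Equiv.Perm.mul_apply, Gperm_pow_even, Gperm_dbl]

lemma orb_Gperm_dbl (σ : Equiv.Perm (Fin (p + q))) (k : Fin (p + q)) :
    orb (Gperm σ) (dbl k) =
      (orb σ k).image dbl ∪ (orb σ k).image (fun m => oddPt (gammaPQ p q m)) := by
  ext y
  simp only [Finset.mem_union, Finset.mem_image, mem_orb]
  constructor
  · intro hy
    obtain ⟨j, hj⟩ := (sameCycle_iff_nat _ _ _).1 hy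
    rcases Nat.even_or_odd j with ⟨i, hi⟩ | ⟨i, hi⟩
    · left
      refine ⟨(σ ^ i) k, (sameCycle_iff_nat _ _ _).2 ⟨i, rfl⟩, ?_⟩
      rw [← hj, hi, show i + i = 2 * i by omega, Gperm_pow_even]
    · right
      refine ⟨(σ ^ i) k, (sameCycle_iff_nat _ _ _).2 ⟨i, rfl⟩, ?_⟩
      rw [← hj, hi, Gperm_pow_odd]
  · rintro (⟨m, hm, rfl⟩ | ⟨m, hm, rfl⟩)
    · obtain ⟨i, hi⟩ := (sameCycle_iff_nat _ _ _).1 hm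
      exact (sameCycle_iff_nat _ _ _).2 ⟨2 * i, by rw [Gperm_pow_even, hi]⟩
    · obtain ⟨i, hi⟩ := (sameCycle_iff_nat _ _ _).1 hm
      exact (sameCycle_iff_nat _ _ _).2 ⟨2 * i + 1, by rw [Gperm_pow_odd, hi]⟩

lemma orb_Gperm_oddPt (σ : Equiv.Perm (Fin (p + q))) (j : Fin (p + q)) :
    orb (Gperm σ) (oddPt j) = orb (Gperm σ) (dbl ((gammaPQ p q)⁻¹ j)) := by
  apply orb_eq_of_sameCycle
  refine Equiv.Perm.SameCycle.symm ⟨1, ?_⟩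
  simp [Gperm_dbl]

lemma card_orb_Gperm_dbl (σ : Equiv.Perm (Fin (p + q))) (k : Fin (p + q)) :
    (orb (Gperm σ) (dbl k)).card = 2 * (orb σ k).card := by
  have hinj : Function.Injective (fun m : Fin (p + q) => oddPt (p := p) (q := q) (gammaPQ p q m)) :=
    oddPt_inj.comp (Equiv.injective _)
  have hdisj : Disjoint ((orb σ k).image dbl)
      ((orb σ k).image (fun m => oddPt (gammaPQ p q m))) := by
    rw [Finset.disjoint_left]
    rintro y hy hy'
    rw [Finset.mem_image] at hy hy'
    obtain ⟨a, _, rfl⟩ := hy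
    obtain ⟨b, _, hb⟩ := hy'
    exact dbl_ne_oddPt a _ hb.symm
  rw [orb_Gperm_dbl, Finset.card_union_of_disjoint hdisj,
    Finset.card_image_of_injective _ dbl_inj, Finset.card_image_of_injective _ hinj]
  omega

end Gconstruction

section Transfer
variable {p q : ℕ}

lemma cycleLen_eq_orb {n : ℕ} (f : Equiv.Perm (Fin n)) (x : Fin n) :
    cycleLen f x = (orb f x).card := rfl

lemma orbsets_Gperm (σ : Equiv.Perm (Fin (p + q))) :
    (univ.image (orb (Gperm σ))) = (univ.image (orb σ)).image
      (fun S => S.image dbl ∪ S.image (fun m => oddPt (gammaPQ p q m))) := by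
  ext S
  simp only [Finset.mem_image]
  constructor
  · rintro ⟨x, -, rfl⟩
    rcases exists_dbl_or_oddPt x with ⟨k, rfl⟩ | ⟨k, rfl⟩
    · exact ⟨orb σ k, ⟨k, mem_univ k, rfl⟩, (orb_Gperm_dbl σ k).symm⟩
    · refine ⟨orb σ ((gammaPQ p q)⁻¹ k), ⟨_, mem_univ _, rfl⟩, ?_⟩
      rw [← orb_Gperm_dbl, ← orb_Gperm_oddPt]
  · rintro ⟨T, ⟨k, -, rfl⟩, rfl⟩
    exact ⟨dbl k, mem_univ _, orb_Gperm_dbl σ k⟩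

lemma unionmap_inj : Function.Injective
    (fun S : Finset (Fin (p + q)) =>
      S.image dbl ∪ S.image (fun m => oddPt (gammaPQ p q m))) := by
  have key : ∀ S : Finset (Fin (p + q)),
      (S.image dbl ∪ S.image fun m => oddPt (gammaPQ p q m)).filter
        (fun y => y.val % 2 = 1) = S.image dbl := by
    intro S; ext y
    simp only [Finset.mem_filter, Finset.mem_union, Finset.mem_image]
    constructor
    · rintro ⟨h1 | h1, h2⟩
      · exact h1
      · obtain ⟨m, _, rfl⟩ := h1
        rw [oddPt_mod] at h2; omega
    · rintro ⟨a, ha, rfl⟩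
      exact ⟨Or.inl ⟨a, ha, rfl⟩, dbl_mod a⟩
  intro S S' h
  have h2 := congrArg (Finset.filter (fun y => y.val % 2 = 1)) h
  simp only [key] at h2
  exact Finset.image_injective dbl_inj h2

lemma numCycles_Gperm (σ : Equiv.Perm (Fin (p + q))) :
    numCycles (Gperm σ) = numCycles σ := by
  rw [numCycles_eq_card_orbs, numCycles_eq_card_orbs, orbsets_Gperm,
    Finset.card_image_of_injective _ unionmap_inj]

lemma c_oddPt (σ : Equiv.Perm (Fin (p + q))) (m : Fin (p + q)) :
    (gammaPQ (2*p) (2*q) * (Gperm σ)⁻¹) (oddPt m) = oddPt m := by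
  rw [Equiv.Perm.mul_apply, Gperm_inv_oddPt, g2_dbl, Equiv.Perm.apply_inv_self]

lemma c_dbl (σ : Equiv.Perm (Fin (p + q))) (k : Fin (p + q)) :
    (gammaPQ (2*p) (2*q) * (Gperm σ)⁻¹) (dbl k) = dbl ((gammaPQ p q * σ⁻¹) k) := by
  rw [Equiv.Perm.mul_apply, Gperm_inv_dbl, g2_oddPt, Equiv.Perm.mul_apply]

lemma c_pow_dbl (σ : Equiv.Perm (Fin (p + q))) (j : ℕ) (k : Fin (p + q)) :
    ((gammaPQ (2*p) (2*q) * (Gperm σ)⁻¹) ^ j) (dbl k) = dbl (((gammaPQ p q * σ⁻¹) ^ j) k) := by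
  induction j with
  | zero => rfl
  | succ m ih =>
    rw [pow_succ', pow_succ', Equiv.Perm.mul_apply, ih, c_dbl]
    rfl

lemma orb_c_dbl (σ : Equiv.Perm (Fin (p + q))) (k : Fin (p + q)) :
    orb (gammaPQ (2*p) (2*q) * (Gperm σ)⁻¹) (dbl k)
      = (orb (gammaPQ p q * σ⁻¹) k).image dbl := by
  ext y
  simp only [Finset.mem_image, mem_orb]
  constructor
  · intro hy
    obtain ⟨j, hj⟩ := (sameCycle_iff_nat _ _ _).1 hy
    exact ⟨_, (sameCycle_iff_nat _ _ _).2 ⟨j, rfl⟩, by rw [← hj, c_pow_dbl]⟩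
  · rintro ⟨m, hm, rfl⟩
    obtain ⟨j, hj⟩ := (sameCycle_iff_nat _ _ _).1 hm
    exact (sameCycle_iff_nat _ _ _).2 ⟨j, by rw [c_pow_dbl, hj]⟩

lemma numCycles_c (σ : Equiv.Perm (Fin (p + q))) :
    numCycles (gammaPQ (2*p) (2*q) * (Gperm σ)⁻¹) = (p + q) + numCycles (gammaPQ p q * σ⁻¹) := by
  rw [numCycles_eq_card_orbs, numCycles_eq_card_orbs]
  have horb : univ.image (orb (gammaPQ (2*p) (2*q) * (Gperm σ)⁻¹))
      = (univ.image fun m : Fin (p + q) => ({oddPt m} : Finset (Fin (2*p + 2*q))))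
        ∪ ((univ.image (orb (gammaPQ p q * σ⁻¹))).image (Finset.image dbl)) := by
    ext S
    simp only [Finset.mem_union, Finset.mem_image]
    constructor
    · rintro ⟨x, -, rfl⟩
      rcases exists_dbl_or_oddPt x with ⟨k, rfl⟩ | ⟨k, rfl⟩
      · exact Or.inr ⟨orb (gammaPQ p q * σ⁻¹) k, ⟨k, mem_univ k, rfl⟩, (orb_c_dbl σ k).symm⟩
      · exact Or.inl ⟨k, mem_univ k, (orb_fixed' _ (c_oddPt σ k)).symm⟩
    · rintro (⟨m, -, rfl⟩ | ⟨T, ⟨k, -, rfl⟩, rfl⟩)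
      · exact ⟨oddPt m, mem_univ _, orb_fixed' _ (c_oddPt σ m)⟩
      · exact ⟨dbl k, mem_univ _, orb_c_dbl σ k⟩
  rw [horb, Finset.card_union_of_disjoint, Finset.card_image_of_injective _
      (fun a b h => oddPt_inj (by simpa using Finset.singleton_injective h)),
    Finset.card_image_of_injective _ (Finset.image_injective dbl_inj), Finset.card_univ,
    Fintype.card_fin]
  rw [Finset.disjoint_left]
  rintro S hS hS'
  rw [Finset.mem_image] at hS hS'
  obtain ⟨m, -, rfl⟩ := hS
  obtain ⟨T, hT, hTm⟩ := hS'
  rw [Finset.mem_image] at hT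
  obtain ⟨k, -, rfl⟩ := hT
  have : dbl k ∈ ({oddPt m} : Finset (Fin (2*p + 2*q))) := by
    rw [← hTm]
    exact Finset.mem_image_of_mem _ (self_mem_orb _ k)
  rw [Finset.mem_singleton] at this
  exact dbl_ne_oddPt k m this

lemma gammaPQ_inv_block (m : Fin (p + q)) : ((gammaPQ p q)⁻¹ m).val < p ↔ m.val < p := by
  conv_rhs => rw [← Equiv.Perm.apply_inv_self (gammaPQ p q) m]
  rw [gammaPQ_block]

lemma conn_Gperm (σ : Equiv.Perm (Fin (p + q))) :
    (∃ i j, (Gperm σ).SameCycle i j ∧ ¬ (gammaPQ (2*p) (2*q)).SameCycle i j)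
      ↔ (∃ i j, σ.SameCycle i j ∧ ¬ (gammaPQ p q).SameCycle i j) := by
  constructor
  · rintro ⟨x, y, hc, hb⟩
    rw [sameCycle_gammaPQ] at hb
    -- replace x and y by dbl-points in the same orbit and same block
    obtain ⟨kx, hkx1, hkx2⟩ : ∃ k, (Gperm σ).SameCycle (dbl k) x ∧ (x.val < 2*p ↔ k.val < p) := by
      rcases exists_dbl_or_oddPt x with ⟨k, rfl⟩ | ⟨k, rfl⟩
      · exact ⟨k, Equiv.Perm.SameCycle.refl _ _, by rw [dbl_val]; omega⟩
      · refine ⟨(gammaPQ p q)⁻¹ k, ⟨1, by simp [Gperm_dbl]⟩, ?_⟩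
        rw [oddPt_val, gammaPQ_inv_block]
        omega
    obtain ⟨ky, hky1, hky2⟩ : ∃ k, (Gperm σ).SameCycle (dbl k) y ∧ (y.val < 2*p ↔ k.val < p) := by
      rcases exists_dbl_or_oddPt y with ⟨k, rfl⟩ | ⟨k, rfl⟩
      · exact ⟨k, Equiv.Perm.SameCycle.refl _ _, by rw [dbl_val]; omega⟩
      · refine ⟨(gammaPQ p q)⁻¹ k, ⟨1, by simp [Gperm_dbl]⟩, ?_⟩
        rw [oddPt_val, gammaPQ_inv_block]
        omega
    have hdd : (Gperm σ).SameCycle (dbl kx) (dbl ky) :=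
      (hkx1.trans hc).trans hky1.symm
    have : dbl ky ∈ orb (Gperm σ) (dbl kx) := (mem_orb _).2 hdd
    rw [orb_Gperm_dbl, Finset.mem_union, Finset.mem_image, Finset.mem_image] at this
    rcases this with ⟨m, hm, hmk⟩ | ⟨m, hm, hmk⟩
    · have : ky = m := dbl_inj hmk.symm
      subst this
      refine ⟨kx, ky, (mem_orb _).1 hm, ?_⟩
      rw [sameCycle_gammaPQ]
      omega
    · exact absurd hmk.symm (dbl_ne_oddPt ky _)
  · rintro ⟨i, j, hc, hb⟩
    rw [sameCycle_gammaPQ] at hb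
    obtain ⟨t, ht⟩ := (sameCycle_iff_nat _ _ _).1 hc
    refine ⟨dbl i, dbl j, (sameCycle_iff_nat _ _ _).2 ⟨2 * t, by rw [Gperm_pow_even, ht]⟩, ?_⟩
    rw [sameCycle_gammaPQ, dbl_val, dbl_val]
    have := i.isLt; have := j.isLt
    omega

lemma parityReversing_Gperm (σ : Equiv.Perm (Fin (p + q))) : ParityReversing (Gperm σ) := by
  intro x
  rcases exists_dbl_or_oddPt x with ⟨k, rfl⟩ | ⟨k, rfl⟩
  · rw [Gperm_dbl]
    simp only [SameParity, Nat.odd_iff, dbl_val, oddPt_val]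
    omega
  · rw [Gperm_oddPt]
    simp only [SameParity, Nat.odd_iff, dbl_val, oddPt_val]
    omega

lemma evenCycles_Gperm (σ : Equiv.Perm (Fin (p + q))) : EvenCycles (Gperm σ) := by
  intro x
  rcases exists_dbl_or_oddPt x with ⟨k, rfl⟩ | ⟨k, rfl⟩
  · rw [cycleLen_eq_orb, card_orb_Gperm_dbl]
    exact even_two_mul _
  · rw [cycleLen_eq_orb, orb_Gperm_oddPt, card_orb_Gperm_dbl]
    exact even_two_mul _

lemma oddPt_mem_oddSet (k : Fin (p + q)) : oddPt k ∈ oddSet (2*p + 2*q) := by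
  simp [oddSet, Nat.odd_iff, oddPt_val]

lemma separates_Gperm (σ : Equiv.Perm (Fin (p + q))) :
    Separates (gammaPQ (2*p) (2*q) * (Gperm σ)⁻¹) (oddSet (2*p + 2*q)) := by
  intro a ha b hb hab
  have hpar : a.val % 2 = 0 := by
    simp only [oddSet, Finset.mem_filter, Nat.odd_iff] at ha
    omega
  rcases dbl_or_oddPt a with ⟨h1, _⟩ | ⟨_, h2⟩
  · omega
  · rw [h2] at hab ⊢
    exact sameCycle_of_fixed_eq _ (c_oddPt σ _) hab

lemma isSNC_Gperm (σ : Equiv.Perm (Fin (p + q))) :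
    IsSNC (2*p) (2*q) (Gperm σ) ↔ IsSNC p q σ := by
  rw [IsSNC, IsSNC, conn_Gperm, numCycles_Gperm, numCycles_c]
  constructor
  · rintro ⟨h1, h2⟩; exact ⟨h1, by omega⟩
  · rintro ⟨h1, h2⟩; exact ⟨h1, by omega⟩

end Transfer

section Extraction
variable {p q : ℕ}

lemma pr_mod (π : Equiv.Perm (Fin (2*p + 2*q))) (hPR : ParityReversing π)
    (x : Fin (2*p + 2*q)) : (π x).val % 2 = 1 - x.val % 2 := by
  have := hPR x
  simp only [SameParity, Nat.odd_iff] at this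
  omega

noncomputable def extractFun (π : Equiv.Perm (Fin (2*p + 2*q))) (k : Fin (p + q)) :
    Fin (p + q) :=
  halfPt (π (oddPt (gammaPQ p q k)))

lemma pi_oddPt (π : Equiv.Perm (Fin (2*p + 2*q))) (hPR : ParityReversing π)
    (k : Fin (p + q)) : π (oddPt k) = dbl (halfPt (π (oddPt k))) := by
  have hm := pr_mod π hPR (oddPt k)
  rw [oddPt_mod] at hm
  rcases dbl_or_oddPt (π (oddPt k)) with ⟨_, h⟩ | ⟨h1, _⟩
  · exact h
  · omega

lemma extract_inj (π : Equiv.Perm (Fin (2*p + 2*q))) (hPR : ParityReversing π) :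
    Function.Injective (extractFun π) := by
  intro a b h
  rw [extractFun, extractFun] at h
  have h2 : π (oddPt (gammaPQ p q a)) = π (oddPt (gammaPQ p q b)) := by
    rw [pi_oddPt π hPR (gammaPQ p q a), pi_oddPt π hPR (gammaPQ p q b), h]
  exact (gammaPQ p q).injective (oddPt_inj (π.injective h2))

noncomputable def extractPerm (π : Equiv.Perm (Fin (2*p + 2*q))) (hPR : ParityReversing π) :
    Equiv.Perm (Fin (p + q)) :=
  Equiv.ofBijective (extractFun π) (Finite.injective_iff_bijective.1 (extract_inj π hPR))

lemma extractPerm_apply (π : Equiv.Perm (Fin (2*p + 2*q))) (hPR : ParityReversing π)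
    (k : Fin (p + q)) : extractPerm π hPR k = halfPt (π (oddPt (gammaPQ p q k))) := rfl

lemma keyA (π : Equiv.Perm (Fin (2*p + 2*q))) (hPR : ParityReversing π)
    (hSep : Separates (gammaPQ (2*p) (2*q) * π⁻¹) (oddSet (2*p + 2*q))) (k : Fin (p + q)) :
    π (dbl k) = oddPt (gammaPQ p q k) := by
  have hm := pr_mod π hPR (dbl k)
  rw [dbl_mod] at hm
  rcases dbl_or_oddPt (π (dbl k)) with ⟨h1, _⟩ | ⟨_, h2⟩
  · omega
  · have hinv : π⁻¹ (oddPt (halfPt (π (dbl k)))) = dbl k := by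
      rw [← h2, Equiv.Perm.inv_apply_self]
    have hc : (gammaPQ (2*p) (2*q) * π⁻¹) (oddPt (halfPt (π (dbl k))))
        = oddPt (gammaPQ p q k) := by
      rw [Equiv.Perm.mul_apply, hinv, g2_dbl]
    have heq := hSep _ (oddPt_mem_oddSet _) _ (oddPt_mem_oddSet _)
      ⟨1, by rw [zpow_one]; exact hc⟩
    rw [h2, heq]

lemma keyGeq (π : Equiv.Perm (Fin (2*p + 2*q))) (hPR : ParityReversing π)
    (hSep : Separates (gammaPQ (2*p) (2*q) * π⁻¹) (oddSet (2*p + 2*q))) :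
    π = Gperm (extractPerm π hPR) := by
  apply Equiv.ext
  intro x
  rcases exists_dbl_or_oddPt x with ⟨k, rfl⟩ | ⟨k, rfl⟩
  · rw [Gperm_dbl, keyA π hPR hSep]
  · rw [Gperm_oddPt, extractPerm_apply, Equiv.Perm.apply_inv_self]
    exact pi_oddPt π hPR k

lemma extract_Gperm (σ : Equiv.Perm (Fin (p + q))) (hPR : ParityReversing (Gperm σ)) :
    extractPerm (Gperm σ) hPR = σ := by
  apply Equiv.ext
  intro k
  rw [extractPerm_apply, Gperm_oddPt, Equiv.Perm.inv_apply_self, halfPt_dbl]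

end Extraction

theorem stmt9 (p q : ℕ) :
    ∃ F : {π : Equiv.Perm (Fin (2*p + 2*q)) //
            SNCminus (2*p) (2*q) π ∧
            Separates (gammaPQ (2*p) (2*q) * π⁻¹) (oddSet (2*p + 2*q))} →
          {σ : Equiv.Perm (Fin (p + q)) // IsSNC p q σ},
      Function.Bijective F ∧
      (∀ π, ∀ k : Fin (p + q), (π.val ^ 2) (dbl k) = dbl ((F π).val k)) ∧
      (∀ π, ∀ k : Fin (p + q), cycleLen π.val (dbl k) = 2 * cycleLen (F π).val k) := by
  classical
  refine ⟨fun πs => ⟨extractPerm πs.1 πs.2.1.2.2, ?_⟩, ⟨?_, ?_⟩, ?_, ?_⟩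
  · have hG := keyGeq πs.1 πs.2.1.2.2 πs.2.2
    exact (isSNC_Gperm _).1 (hG ▸ πs.2.1.1)
  · -- injective
    rintro a b h
    have h' : extractPerm a.1 a.2.1.2.2 = extractPerm b.1 b.2.1.2.2 := congrArg Subtype.val h
    apply Subtype.ext
    rw [keyGeq a.1 a.2.1.2.2 a.2.2, keyGeq b.1 b.2.1.2.2 b.2.2, h']
  · -- surjective
    rintro ⟨σ, hσ⟩
    refine ⟨⟨Gperm σ, ⟨⟨(isSNC_Gperm σ).2 hσ, evenCycles_Gperm σ, parityReversing_Gperm σ⟩,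
      separates_Gperm σ⟩⟩, ?_⟩
    exact Subtype.ext (extract_Gperm σ (parityReversing_Gperm σ))
  · -- square property
    intro πs k
    have hG := keyGeq πs.1 πs.2.1.2.2 πs.2.2
    conv_lhs => rw [hG]
    rw [pow_two, Equiv.Perm.mul_apply, Gperm_sq_dbl]
  · -- cycle length property
    intro πs k
    have hG := keyGeq πs.1 πs.2.1.2.2 πs.2.2
    rw [cycleLen_eq_orb, cycleLen_eq_orb]
    conv_lhs => rw [hG]
    rw [card_orb_Gperm_dbl]
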